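/- For every positive integer n, the number 2^{n(n-1)/2} · ∏_{i=0}^{n-1} (4i+2)!/(n+2i+1)! is a positive integer. -/

import Mathlib

open Nat Finset

lemma count_indicator (n c : ℕ) : ∑ i ∈ Finset.range n, (if c ≤ i then (1:ℕ) else 0) = n - c := by
  induction n with
  | zero => simp
  | succ k ih => rw [Finset.sum_range_succ, ih]; split <;> omega

lemma div_split3 (m x : ℕ) (h : x < 3*m) :
    x / m = (if m ≤ x then 1 else 0) + (if 2*m ≤ x then 1 else 0) := by
  rcases Nat.eq_zero_or_pos m with rfl|hm
  · omega
  rcases le_or_gt m x with h1|h1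
  · rcases le_or_gt (2*m) x with h2|h2
    · have : x / m = 2 := Nat.div_eq_of_lt_le (by omega) (by omega)
      simp [h1, h2, this]
    · have : x / m = 1 := Nat.div_eq_of_lt_le (by omega) (by omega)
      simp only [this, if_pos h1, if_neg (by omega : ¬ 2*m ≤ x)]
  · rw [if_neg (by omega), if_neg (by omega), Nat.div_eq_of_lt h1]

lemma div_split4 (m x : ℕ) (h : x < 4*m) :
    x / m = (if m ≤ x then 1 else 0) + (if 2*m ≤ x then 1 else 0) + (if 3*m ≤ x then 1 else 0) := by
  rcases Nat.eq_zero_or_pos m with rfl|hm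
  · omega
  rcases le_or_gt (3*m) x with h3|h3
  · have : x / m = 3 := Nat.div_eq_of_lt_le (by omega) (by omega)
    simp only [this, if_pos (show m ≤ x by omega), if_pos (show 2*m ≤ x by omega), if_pos h3]
  · rw [div_split3 m x h3, if_neg (show ¬ 3*m ≤ x by omega)]; exact (add_zero _).symm

lemma key_base (m n : ℕ) (hm : m % 2 = 1) (h : n < m) :
    ∑ i ∈ range n, (n+2*i+1)/m ≤ ∑ i ∈ range n, (4*i+2)/m := by
  have hL : ∑ i ∈ range n, (n+2*i+1)/m
      = (n - (m-n)/2) + (n - (2*m-n)/2) := by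
    rw [← count_indicator n ((m-n)/2), ← count_indicator n ((2*m-n)/2), ← Finset.sum_add_distrib]
    refine Finset.sum_congr rfl fun i hi => ?_
    have hi' : i < n := Finset.mem_range.mp hi
    rw [div_split3 m _ (by omega)]
    have e1 : (m ≤ n+2*i+1) ↔ ((m-n)/2 ≤ i) := by omega
    have e2 : (2*m ≤ n+2*i+1) ↔ ((2*m-n)/2 ≤ i) := by omega
    simp only [e1, e2]
  have hR : ∑ i ∈ range n, (4*i+2)/m
      = (n - (m+1)/4) + (n - (2*m+1)/4) + (n - (3*m+1)/4) := by
    rw [← count_indicator n ((m+1)/4), ← count_indicator n ((2*m+1)/4),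
      ← count_indicator n ((3*m+1)/4), ← Finset.sum_add_distrib, ← Finset.sum_add_distrib]
    refine Finset.sum_congr rfl fun i hi => ?_
    have hi' : i < n := Finset.mem_range.mp hi
    rw [div_split4 m _ (by omega)]
    have e1 : (m ≤ 4*i+2) ↔ ((m+1)/4 ≤ i) := by omega
    have e2 : (2*m ≤ 4*i+2) ↔ ((2*m+1)/4 ≤ i) := by omega
    have e3 : (3*m ≤ 4*i+2) ↔ ((3*m+1)/4 ≤ i) := by omega
    simp only [e1, e2, e3]
  rw [hL, hR]; omega

lemma mod_period (m d a : ℕ) (hm : 0 < m) (hd : Nat.Coprime d m) :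
    ∑ j ∈ range m, (a + d*j) % m = ∑ j ∈ range m, j := by
  have hinj : Set.InjOn (fun j => (a + d*j) % m) (range m) := by
    intro j₁ h₁ j₂ h₂ he
    simp only [Finset.coe_range, Set.mem_Iio] at h₁ h₂
    have : a + d*j₁ ≡ a + d*j₂ [MOD m] := he
    have h3 : d*j₁ ≡ d*j₂ [MOD m] := (Nat.ModEq.add_left_cancel' a this)
    have h4 : j₁ ≡ j₂ [MOD m] := Nat.ModEq.cancel_left_of_coprime hd.symm h3
    have h5 : j₁ % m = j₂ % m := h4
    rwa [Nat.mod_eq_of_lt h₁, Nat.mod_eq_of_lt h₂] at h5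
  have himg : Finset.image (fun j => (a + d*j) % m) (range m) = range m := by
    apply Finset.eq_of_subset_of_card_le
    · intro x hx
      simp only [Finset.mem_image] at hx
      obtain ⟨j, _, rfl⟩ := hx
      exact Finset.mem_range.mpr (Nat.mod_lt _ hm)
    · rw [Finset.card_image_of_injOn hinj]
  conv_rhs => rw [← himg]
  rw [Finset.sum_image (fun x hx y hy h => hinj hx hy h)]

lemma div_period (t d a : ℕ) (hd : Nat.Coprime d (2*t+1)) :
    ∑ j ∈ range (2*t+1), (a + d*j) / (2*t+1) = a + (d-1)*t := by
  set m := 2*t+1 with hm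
  have h1 : ∀ j, (a + d*j) / m * m + (a + d*j) % m = a + d*j := fun j => by rw [mul_comm]; exact Nat.div_add_mod _ _
  have hsum : (∑ j ∈ range m, (a + d*j) / m) * m + ∑ j ∈ range m, (a + d*j) % m
      = ∑ j ∈ range m, (a + d*j) := by
    rw [Finset.sum_mul, ← Finset.sum_add_distrib]
    exact Finset.sum_congr rfl fun j _ => h1 j
  rw [mod_period m d a (by omega) hd] at hsum
  have hgauss : ∑ j ∈ range m, j = m * t := by
    have h2 := Finset.sum_range_id_mul_two m
    have hmm : m * (m - 1) = (m * t) * 2 := by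
      have : m - 1 = 2*t := by omega
      rw [this, hm]; ring
    omega
  have htot : ∑ j ∈ range m, (a + d*j) = m * a + d * (m * t) := by
    rw [Finset.sum_add_distrib, Finset.sum_const, ← Finset.mul_sum, hgauss]
    simp [mul_comm]
  rw [hgauss, htot] at hsum
  rcases Nat.eq_zero_or_pos d with rfl|hd1
  · have hm1 : m = 1 := (Nat.coprime_zero_left m).mp hd
    have ht : t = 0 := by omega
    subst ht; simp [hm1]
  obtain ⟨e, rfl⟩ : ∃ e, d = e + 1 := ⟨d - 1, by omega⟩
  have heq : (a + (e+1-1)*t) * m + m * t = m * a + (e+1) * (m*t) := by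
    simp only [Nat.add_sub_cancel]; ring
  have hfin : (∑ j ∈ range m, (a + (e+1)*j) / m) * m = (a + (e+1-1)*t) * m := by omega
  exact Nat.eq_of_mul_eq_mul_right (by omega) hfin

lemma key (m : ℕ) (hm : m % 2 = 1) (n : ℕ) :
    ∑ i ∈ range n, (n+2*i+1)/m ≤ ∑ i ∈ range n, (4*i+2)/m := by
  obtain ⟨t, rfl⟩ : ∃ t, m = 2*t+1 := ⟨m/2, by omega⟩
  induction n using Nat.strong_induction_on with
  | _ n ih =>
    set m := 2*t+1 with hmdef
    rcases lt_or_ge n m with h|h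
    · exact key_base m n hm h
    · obtain ⟨k, rfl⟩ : ∃ k, n = k + m := ⟨n - m, by omega⟩
      have hco2 : Nat.Coprime 2 m := Nat.coprime_two_left.mpr ⟨t, by omega⟩
      have hco4 : Nat.Coprime 4 m := by
        have := Nat.Coprime.pow_left 2 hco2
        norm_num at this; exact this
      have hnum : ∑ i ∈ range (k+m), (4*i+2)/m
          = (∑ i ∈ range k, (4*i+2)/m) + (4*k+2 + 3*t) := by
        rw [Finset.sum_range_add]
        congr 1
        have : ∀ j, (4*(k+j)+2)/m = (4*k+2 + 4*j)/m := fun j => by ring_nf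
        rw [Finset.sum_congr rfl fun j _ => this j, div_period t 4 (4*k+2) hco4]
      have hden : ∑ i ∈ range (k+m), ((k+m)+2*i+1)/m
          = (∑ i ∈ range k, (k+2*i+1)/m) + (3*k+1 + t) + (k+m) := by
        have hpt : ∀ i, ((k+m)+2*i+1)/m = (k+2*i+1)/m + 1 := by
          intro i
          have : (k+m)+2*i+1 = (k+2*i+1) + m := by ring
          rw [this, Nat.add_div_right _ (by omega)]
        rw [Finset.sum_congr rfl fun i _ => hpt i, Finset.sum_add_distrib,
          Finset.sum_const, Finset.card_range, Finset.sum_range_add]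
        have : ∀ j, (k+2*(k+j)+1)/m = (3*k+1 + 2*j)/m := fun j => by ring_nf
        rw [Finset.sum_congr rfl fun j _ => this j, div_period t 2 (3*k+1) hco2]
        simp [Nat.smul_one_eq_cast]
      have hih := ih k (by omega)
      omega

-- digit-sum helpers
lemma digitsum_le (x : ℕ) : (Nat.digits 2 x).sum ≤ x := by
  induction x using Nat.strong_induction_on with
  | _ x ih =>
    rcases Nat.eq_zero_or_pos x with rfl|hx
    · simp
    · rw [Nat.digits_def' (by norm_num : (1:ℕ) < 2) hx]
      simp only [List.sum_cons]
      have := ih (x/2) (by omega)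
      omega

lemma digitsum_pos (x : ℕ) (hx : 0 < x) : 0 < (Nat.digits 2 x).sum := by
  induction x using Nat.strong_induction_on with
  | _ x ih =>
    rw [Nat.digits_def' (by norm_num : (1:ℕ) < 2) hx]
    simp only [List.sum_cons]
    rcases Nat.eq_zero_or_pos (x % 2) with h|h
    · have hx2 : 0 < x/2 := by omega
      have := ih (x/2) (by omega) hx2
      omega
    · omega

lemma digitsum_four (i : ℕ) : (Nat.digits 2 (4*i+2)).sum = (Nat.digits 2 i).sum + 1 := by
  rw [Nat.digits_def' (by norm_num : (1:ℕ) < 2) (by omega),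
    show (4*i+2)/2 = 2*i+1 by omega,
    Nat.digits_def' (by norm_num : (1:ℕ) < 2) (by omega),
    show (2*i+1)/2 = i by omega]
  simp only [List.sum_cons]
  omega

lemma main_dvd (n : ℕ) :
    (∏ i ∈ range n, (n+2*i+1)!) ∣ 2^(n*(n-1)/2) * ∏ i ∈ range n, (4*i+2)! := by
  have hD : (∏ i ∈ range n, (n+2*i+1)!) ≠ 0 :=
    Finset.prod_ne_zero_iff.mpr fun i _ => (Nat.factorial_pos _).ne'
  have hP : (∏ i ∈ range n, (4*i+2)!) ≠ 0 :=
    Finset.prod_ne_zero_iff.mpr fun i _ => (Nat.factorial_pos _).ne'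
  have hM2 : (2:ℕ)^(n*(n-1)/2) ≠ 0 := by positivity
  rw [← Nat.factorization_le_iff_dvd hD (by positivity), Finsupp.le_def]
  intro p
  by_cases hp : p.Prime
  swap
  · simp [Nat.factorization_eq_zero_of_not_prime _ hp]
  haveI := Fact.mk hp
  rw [Nat.factorization_mul hM2 hP,
    Nat.factorization_prod (fun i _ => (Nat.factorial_pos _).ne'),
    Nat.factorization_prod (fun i _ => (Nat.factorial_pos _).ne')]
  rw [Finsupp.add_apply, Nat.factorization_pow, Finsupp.smul_apply, smul_eq_mul]
  rw [Finset.sum_apply', Finset.sum_apply']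
  simp only [Nat.factorization_def _ hp]
  by_cases hp2 : p = 2
  · subst hp2
    have hv : ∀ N : ℕ, padicValNat 2 (N !) = N - (Nat.digits 2 N).sum := by
      intro N
      have h := sub_one_mul_padicValNat_factorial (p := 2) N
      simpa using h
    have hL : ∑ i ∈ range n, padicValNat 2 ((n+2*i+1)!) ≤ ∑ i ∈ range n, (n+2*i) := by
      refine Finset.sum_le_sum fun i _ => ?_
      rw [hv]
      have h1 := digitsum_pos (n+2*i+1) (by omega)
      omega
    have hR : ∑ i ∈ range n, (3*i+1) ≤ ∑ i ∈ range n, padicValNat 2 ((4*i+2)!) := by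
      refine Finset.sum_le_sum fun i _ => ?_
      rw [hv, digitsum_four]
      have h1 := digitsum_le i
      omega
    have hT := Finset.sum_range_id_mul_two n
    have e1 : ∑ i ∈ range n, (n+2*i) = n*n + (∑ i ∈ range n, i) * 2 := by
      rw [Finset.sum_add_distrib, Finset.sum_const, Finset.card_range, smul_eq_mul,
        ← Finset.mul_sum, mul_comm 2]
    have e2 : ∑ i ∈ range n, (3*i+1) = (∑ i ∈ range n, i) * 3 + n := by
      rw [Finset.sum_add_distrib, Finset.sum_const, Finset.card_range, smul_eq_mul,
        Finset.sum_mul]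
      simp [mul_comm]
    have e3 : n*(n-1)/2 = ∑ i ∈ range n, i := (Finset.sum_range_id n).symm
    have e4 : n*n = n*(n-1) + n := by
      cases n with
      | zero => simp
      | succ m => simp [Nat.succ_sub_one]; ring
    rw [e3]
    rw [padicValNat.self (by norm_num), mul_one]
    omega
  · have hfac2 : padicValNat p 2 = 0 :=
      padicValNat.eq_zero_of_not_dvd (fun hdvd =>
        hp2 ((Nat.prime_dvd_prime_iff_eq hp Nat.prime_two).mp hdvd))
    rw [hfac2, mul_zero, zero_add]
    have podd : p % 2 = 1 := Nat.odd_iff.mp (hp.odd_of_ne_two hp2)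
    set b := 4*n+1 with hb
    have hvden : ∀ i ∈ range n, padicValNat p ((n+2*i+1)!) = ∑ k ∈ Ico 1 b, (n+2*i+1) / p^k := by
      intro i hi
      have hi' : i < n := Finset.mem_range.mp hi
      exact padicValNat_factorial (lt_of_le_of_lt (Nat.log_le_self _ _) (by omega))
    have hvnum : ∀ i ∈ range n, padicValNat p ((4*i+2)!) = ∑ k ∈ Ico 1 b, (4*i+2) / p^k := by
      intro i hi
      have hi' : i < n := Finset.mem_range.mp hi
      exact padicValNat_factorial (lt_of_le_of_lt (Nat.log_le_self _ _) (by omega))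
    rw [Finset.sum_congr rfl hvden, Finset.sum_congr rfl hvnum,
      Finset.sum_comm, Finset.sum_comm (s := range n)]
    refine Finset.sum_le_sum fun k _ => ?_
    exact key (p^k) (Nat.odd_iff.mp (Odd.pow (Nat.odd_iff.mpr podd))) n

/-- Di Francesco's conjectured formula (1.1) for the number of domino tilings of T_n
is a positive integer. -/
theorem stmt_6 (n : ℕ) (hn : 1 ≤ n) :
    ∃ N : ℕ, 0 < N ∧ (N : ℚ) =
      2 ^ (n * (n - 1) / 2) *
        ∏ i ∈ Finset.range n, ((4 * i + 2)! : ℚ) / ((n + 2 * i + 1)!) := by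
  have hdvd := main_dvd n
  have hD0 : (∏ i ∈ range n, (n+2*i+1)!) ≠ 0 :=
    Finset.prod_ne_zero_iff.mpr fun i _ => (Nat.factorial_pos _).ne'
  have hM0 : (2^(n*(n-1)/2) * ∏ i ∈ range n, (4*i+2)!) ≠ 0 := by
    have : (∏ i ∈ range n, (4*i+2)!) ≠ 0 :=
      Finset.prod_ne_zero_iff.mpr fun i _ => (Nat.factorial_pos _).ne'
    positivity
  refine ⟨(2^(n*(n-1)/2) * ∏ i ∈ range n, (4*i+2)!) / (∏ i ∈ range n, (n+2*i+1)!),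
    Nat.div_pos (Nat.le_of_dvd (Nat.pos_of_ne_zero hM0) hdvd) (Nat.pos_of_ne_zero hD0), ?_⟩
  rw [Nat.cast_div hdvd (by exact_mod_cast hD0)]
  rw [Finset.prod_div_distrib]
  push_cast
  rw [mul_div_assoc]
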